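/- Let ℏ ∈ ℂ with ℏ ≠ 0. For ξ in the slit plane ℂ ∖ (−∞,0], define f₊(ξ) = ξ^{−1/2}·exp(ξ²/ℏ) and f₋(ξ) = ξ^{−1/2}·exp(−ξ²/ℏ), where ξ^{−1/2} denotes the principal branch of the complex power. Then f₊ and f₋ are twice differentiable on the slit plane and satisfy f″(ξ) = (4ξ²/ℏ² + 3/(4ξ²))·f(ξ) there; moreover their Wronskian satisfies f₊(ξ)·f₋′(ξ) − f₊′(ξ)·f₋(ξ) = −4/ℏ for all ξ in the slit plane, so f₊ and f₋ are linearly independent. -/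

import Mathlib

open Complex

lemma auxD (ℏ s : ℂ) {ξ : ℂ} (hξ : ξ ∈ Complex.slitPlane) :
    HasDerivAt (fun x : ℂ => x ^ (-(1 : ℂ) / 2) * Complex.exp (s * x ^ 2 / ℏ))
      ((2 * s * ξ / ℏ - 1 / (2 * ξ)) *
        (ξ ^ (-(1 : ℂ) / 2) * Complex.exp (s * ξ ^ 2 / ℏ))) ξ := by
  have hne : ξ ≠ 0 := slitPlane_ne_zero hξ
  have h1 : HasDerivAt (fun x : ℂ => x ^ (-(1 : ℂ) / 2))
      (-(1 : ℂ) / 2 * ξ ^ (-(1 : ℂ) / 2 - 1) * 1) ξ :=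
    (hasDerivAt_id ξ).cpow_const hξ
  have h2 : HasDerivAt (fun x : ℂ => Complex.exp (s * x ^ 2 / ℏ))
      (Complex.exp (s * ξ ^ 2 / ℏ) * (s * (2 * ξ ^ 1) / ℏ)) ξ :=
    (((hasDerivAt_pow 2 ξ).const_mul s).div_const ℏ).cexp
  have h := h1.mul h2
  have hsub : ξ ^ (-(1 : ℂ) / 2 - 1) = ξ ^ (-(1 : ℂ) / 2) * ξ⁻¹ := by
    rw [sub_eq_add_neg, cpow_add _ _ hne, cpow_neg, cpow_one]
  refine h.congr_deriv ?_
  symm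
  rw [hsub]
  field_simp
  ring
  
lemma auxD2 (ℏ s : ℂ) (hℏ : ℏ ≠ 0) (hs : s ^ 2 = 1) {ξ : ℂ} (hξ : ξ ∈ Complex.slitPlane) :
    HasDerivAt (fun x : ℂ => (2 * s * x / ℏ - 1 / (2 * x)) *
        (x ^ (-(1 : ℂ) / 2) * Complex.exp (s * x ^ 2 / ℏ)))
      ((4 * ξ ^ 2 / ℏ ^ 2 + 3 / (4 * ξ ^ 2)) *
        (ξ ^ (-(1 : ℂ) / 2) * Complex.exp (s * ξ ^ 2 / ℏ))) ξ := by
  have hne : ξ ≠ 0 := slitPlane_ne_zero hξ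
  have hg1 : HasDerivAt (fun x : ℂ => 2 * s * x / ℏ) (2 * s * 1 / ℏ) ξ :=
    ((hasDerivAt_id ξ).const_mul (2 * s)).div_const ℏ
  have hg2 : HasDerivAt (fun x : ℂ => 1 / (2 * x)) (-(2 : ℂ) / (2 * ξ) ^ 2) ξ := by
    have := (((hasDerivAt_id ξ).const_mul 2).inv (by simpa using hne))
    simpa [one_div, Pi.inv_def] using this
  have hg := hg1.sub hg2
  have h := hg.mul (auxD ℏ s hξ)
  refine h.congr_deriv ?_
  symm
  simp only [Pi.sub_apply]
  have hW : Complex.exp (s * ξ ^ 2 / ℏ) ≠ 0 := Complex.exp_ne_zero _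
  have hid : 4 * ξ ^ 2 / ℏ ^ 2 + 3 / (4 * ξ ^ 2)
      = (2 * s * 1 / ℏ - -2 / (2 * ξ) ^ 2) + (2 * s * ξ / ℏ - 1 / (2 * ξ)) ^ 2 := by
    field_simp
    linear_combination (-64 * ξ ^ 4 : ℂ) * hs
  linear_combination (ξ ^ (-(1:ℂ) / 2) * Complex.exp (s * ξ ^ 2 / ℏ)) * hid

/-- The local model near an apparent singularity: on the slit plane
`ℂ ∖ (−∞,0]`, the functions `f₊(ξ) = ξ^{−1/2}e^{ξ²/ℏ}` and
`f₋(ξ) = ξ^{−1/2}e^{−ξ²/ℏ}` are twice differentiable, solve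
`f″ = (4ξ²/ℏ² + 3/(4ξ²))·f`, have Wronskian `f₊f₋′ − f₊′f₋ = −4/ℏ`,
and are linearly independent. -/
theorem local_model_no_stokes
    (ℏ : ℂ) (hℏ : ℏ ≠ 0) :
    ∃ fp' fm' : ℂ → ℂ,
      (∀ ξ ∈ Complex.slitPlane,
        HasDerivAt (fun x : ℂ => x ^ (-(1 : ℂ) / 2) * Complex.exp (x ^ 2 / ℏ))
          (fp' ξ) ξ ∧
        HasDerivAt (fun x : ℂ => x ^ (-(1 : ℂ) / 2) * Complex.exp (-(x ^ 2) / ℏ))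
          (fm' ξ) ξ) ∧
      (∀ ξ ∈ Complex.slitPlane,
        HasDerivAt fp'
          ((4 * ξ ^ 2 / ℏ ^ 2 + 3 / (4 * ξ ^ 2)) *
            (ξ ^ (-(1 : ℂ) / 2) * Complex.exp (ξ ^ 2 / ℏ))) ξ ∧
        HasDerivAt fm'
          ((4 * ξ ^ 2 / ℏ ^ 2 + 3 / (4 * ξ ^ 2)) *
            (ξ ^ (-(1 : ℂ) / 2) * Complex.exp (-(ξ ^ 2) / ℏ))) ξ) ∧
      (∀ ξ ∈ Complex.slitPlane,
        (ξ ^ (-(1 : ℂ) / 2) * Complex.exp (ξ ^ 2 / ℏ)) * fm' ξ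
          - fp' ξ * (ξ ^ (-(1 : ℂ) / 2) * Complex.exp (-(ξ ^ 2) / ℏ)) = -4 / ℏ) ∧
      (∀ α β : ℂ,
        (∀ ξ ∈ Complex.slitPlane,
          α * (ξ ^ (-(1 : ℂ) / 2) * Complex.exp (ξ ^ 2 / ℏ))
            + β * (ξ ^ (-(1 : ℂ) / 2) * Complex.exp (-(ξ ^ 2) / ℏ)) = 0) →
        α = 0 ∧ β = 0) := by
  refine ⟨fun ξ => (2 * ξ / ℏ - 1 / (2 * ξ)) * (ξ ^ (-(1 : ℂ) / 2) * Complex.exp (ξ ^ 2 / ℏ)),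
    fun ξ => (-(2 * ξ) / ℏ - 1 / (2 * ξ)) * (ξ ^ (-(1 : ℂ) / 2) * Complex.exp (-(ξ ^ 2) / ℏ)),
    ?_, ?_, ?_, ?_⟩
  · intro ξ hξ
    constructor
    · have h := auxD ℏ 1 hξ
      simpa only [one_mul, mul_one] using h
    · have h := auxD ℏ (-1) hξ
      simpa only [mul_neg_one, neg_mul, one_mul, mul_one] using h
  · intro ξ hξ
    constructor
    · have h := auxD2 ℏ 1 hℏ (by norm_num) hξ
      simpa only [one_mul, mul_one] using h
    · have h := auxD2 ℏ (-1) hℏ (by norm_num) hξ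
      simpa only [mul_neg_one, neg_mul, one_mul, mul_one] using h
  · intro ξ hξ
    have hne : ξ ≠ 0 := Complex.slitPlane_ne_zero hξ
    have hE : Complex.exp (ξ ^ 2 / ℏ) * Complex.exp (-(ξ ^ 2) / ℏ) = 1 := by
      rw [← Complex.exp_add, show ξ ^ 2 / ℏ + -(ξ ^ 2) / ℏ = 0 by ring, Complex.exp_zero]
    have hP : ξ ^ (-(1 : ℂ) / 2) * ξ ^ (-(1 : ℂ) / 2) = ξ⁻¹ := by
      rw [← cpow_add _ _ hne, show (-(1 : ℂ) / 2 + -(1 : ℂ) / 2) = -1 by ring, cpow_neg_one]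
    have : (ξ ^ (-(1 : ℂ) / 2) * Complex.exp (ξ ^ 2 / ℏ)) *
          ((-(2 * ξ) / ℏ - 1 / (2 * ξ)) * (ξ ^ (-(1 : ℂ) / 2) * Complex.exp (-(ξ ^ 2) / ℏ)))
        - ((2 * ξ / ℏ - 1 / (2 * ξ)) * (ξ ^ (-(1 : ℂ) / 2) * Complex.exp (ξ ^ 2 / ℏ))) *
          (ξ ^ (-(1 : ℂ) / 2) * Complex.exp (-(ξ ^ 2) / ℏ))
        = (-4 * ξ / ℏ) * ((ξ ^ (-(1 : ℂ) / 2) * ξ ^ (-(1 : ℂ) / 2)) *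
            (Complex.exp (ξ ^ 2 / ℏ) * Complex.exp (-(ξ ^ 2) / ℏ))) := by ring
    rw [this, hP, hE, mul_one]
    field_simp
  · intro α β h
    have h1m : (1 : ℂ) ∈ Complex.slitPlane := Complex.one_mem_slitPlane
    have hp := auxD ℏ 1 h1m
    have hm := auxD ℏ (-1) h1m
    have hp' : HasDerivAt (fun x : ℂ => x ^ (-(1 : ℂ) / 2) * Complex.exp (x ^ 2 / ℏ))
        ((2 * 1 / ℏ - 1 / (2 * 1)) * ((1 : ℂ) ^ (-(1 : ℂ) / 2) * Complex.exp ((1 : ℂ) ^ 2 / ℏ))) 1 := by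
      simpa only [one_mul, mul_one] using hp
    have hm' : HasDerivAt (fun x : ℂ => x ^ (-(1 : ℂ) / 2) * Complex.exp (-(x ^ 2) / ℏ))
        ((-(2 * 1) / ℏ - 1 / (2 * 1)) *
          ((1 : ℂ) ^ (-(1 : ℂ) / 2) * Complex.exp (-((1 : ℂ) ^ 2) / ℏ))) 1 := by
      simpa only [mul_neg_one, neg_mul, one_mul, mul_one] using hm
    have hF := (hp'.const_mul α).add (hm'.const_mul β)
    have hzero : (fun x : ℂ => α * (x ^ (-(1 : ℂ) / 2) * Complex.exp (x ^ 2 / ℏ))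
        + β * (x ^ (-(1 : ℂ) / 2) * Complex.exp (-(x ^ 2) / ℏ)))
        =ᶠ[nhds 1] (fun _ : ℂ => (0 : ℂ)) := by
      filter_upwards [Complex.isOpen_slitPlane.eventually_mem h1m] with x hx
      exact h x hx
    have hF0 : HasDerivAt (fun _ : ℂ => (0 : ℂ))
        (α * ((2 * 1 / ℏ - 1 / (2 * 1)) * ((1 : ℂ) ^ (-(1 : ℂ) / 2) * Complex.exp ((1 : ℂ) ^ 2 / ℏ)))
          + β * ((-(2 * 1) / ℏ - 1 / (2 * 1)) *
              ((1 : ℂ) ^ (-(1 : ℂ) / 2) * Complex.exp (-((1 : ℂ) ^ 2) / ℏ)))) 1 :=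
      hF.congr_of_eventuallyEq hzero.symm
    have hd0 := hF0.unique (hasDerivAt_const 1 0)
    have hv0 := h 1 h1m
    have hkeyα : α * ((1 : ℂ) ^ (-(1 : ℂ) / 2) * Complex.exp ((1 : ℂ) ^ 2 / ℏ)) * (-4 / ℏ) = 0 := by
      linear_combination (-(2 * 1) / ℏ - 1 / (2 * 1)) * hv0 - hd0
    have hkeyβ : β * ((1 : ℂ) ^ (-(1 : ℂ) / 2) * Complex.exp (-((1 : ℂ) ^ 2) / ℏ)) * (4 / ℏ) = 0 := by
      linear_combination (2 * 1 / ℏ - 1 / (2 * 1)) * hv0 - hd0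
    rw [one_cpow, one_mul] at hkeyα hkeyβ
    constructor
    · have := mul_eq_zero.mp hkeyα
      rcases this with h' | h'
      · rcases mul_eq_zero.mp h' with h'' | h''
        · exact h''
        · exact absurd h'' (Complex.exp_ne_zero _)
      · exact absurd h' (by field_simp; simp)
    · have := mul_eq_zero.mp hkeyβ
      rcases this with h' | h'
      · rcases mul_eq_zero.mp h' with h'' | h''
        · exact h''
        · exact absurd h'' (Complex.exp_ne_zero _)
      · exact absurd h' (by field_simp; simp)
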